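/- Let Z ~ Bernoulli(p) and W = α(Z - p) for a real constant α. Then E|X_n² - E[X_n²]|³ ≤ 34.5·α⁶·p(1-p)·n³, where X_n = Σ_{i=1}^n W_i with W_i i.i.d. copies of W. -/

import Mathlib

open MeasureTheory ProbabilityTheory Finset

section AuxiliaryBernoulliMoments

set_option linter.unusedSectionVars false

variable {Ω : Type*} [MeasurableSpace Ω] {μ : Measure Ω} [IsProbabilityMeasure μ]
  {n : ℕ} {α p : ℝ} {W : Fin n → Ω → ℝ}

lemma bern_mom (hWmeas : ∀ i, Measurable (W i))
    (hlaw : ∀ i, Measure.map (W i) μ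
      = (ENNReal.ofReal p) • Measure.dirac (α * (1 - p))
        + (ENNReal.ofReal (1 - p)) • Measure.dirac (-(α * p)))
    (hp0 : 0 ≤ p) (hp1 : p ≤ 1) (i : Fin n) (k : ℕ) :
    ∫ ω, (W i ω) ^ k ∂μ = p * (α * (1 - p)) ^ k + (1 - p) * (-(α * p)) ^ k := by
  have hfm : Measurable fun x : ℝ => x ^ k := measurable_id.pow_const k
  have hd : ∀ a : ℝ, Integrable (fun x : ℝ => x ^ k) (Measure.dirac a) :=
    fun a => ⟨hfm.aestronglyMeasurable, by
      simp only [HasFiniteIntegral, lintegral_dirac]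
      exact ENNReal.coe_lt_top⟩
  rw [← integral_map (hWmeas i).aemeasurable hfm.aestronglyMeasurable, hlaw i,
    integral_add_measure ((hd _).smul_measure ENNReal.ofReal_ne_top)
      ((hd _).smul_measure ENNReal.ofReal_ne_top),
    integral_smul_measure, integral_smul_measure, integral_dirac, integral_dirac,
    ENNReal.toReal_ofReal hp0, ENNReal.toReal_ofReal (by linarith)]
  simp [smul_eq_mul]

lemma bern_ae (hWmeas : ∀ i, Measurable (W i))
    (hlaw : ∀ i, Measure.map (W i) μ
      = (ENNReal.ofReal p) • Measure.dirac (α * (1 - p))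
        + (ENNReal.ofReal (1 - p)) • Measure.dirac (-(α * p)))
    (hp0 : 0 ≤ p) (hp1 : p ≤ 1) (i : Fin n) :
    ∀ᵐ ω ∂μ, |W i ω| ≤ |α| := by
  have h1p : |1 - p| ≤ 1 := abs_le.mpr ⟨by linarith, by linarith⟩
  have hpp : |p| ≤ 1 := abs_le.mpr ⟨by linarith, by linarith⟩
  have ha : |α * (1 - p)| ≤ |α| := by
    rw [abs_mul]
    nlinarith [abs_nonneg α]
  have hb : |(-(α * p))| ≤ |α| := by
    rw [abs_neg, abs_mul]
    nlinarith [abs_nonneg α]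
  have hA : MeasurableSet {x : ℝ | |x| ≤ |α|} :=
    measurableSet_le (measurable_id.abs) measurable_const
  rw [ae_iff]
  have hset : {ω | ¬ |W i ω| ≤ |α|} = W i ⁻¹' ({x : ℝ | |x| ≤ |α|}ᶜ) := by
    ext ω; simp
  rw [hset, ← Measure.map_apply (hWmeas i) hA.compl, hlaw i]
  rw [Measure.coe_add, Pi.add_apply, Measure.smul_apply, Measure.smul_apply,
    Measure.dirac_apply' _ hA.compl, Measure.dirac_apply' _ hA.compl]
  rw [Set.indicator_of_notMem (by simpa using ha), Set.indicator_of_notMem (by simpa using hb)]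
  simp

lemma int_of_bound {f : Ω → ℝ} (hm : AEStronglyMeasurable f μ) {C : ℝ}
    (h : ∀ᵐ ω ∂μ, |f ω| ≤ C) : Integrable f μ :=
  (integrable_const C).mono' hm (by simpa [Real.norm_eq_abs] using h)

lemma bern_step (hWmeas : ∀ i, Measurable (W i))
    (hindep : iIndepFun W μ)
    (hWae : ∀ i, ∀ᵐ ω ∂μ, |W i ω| ≤ |α|)
    (M : ℕ → ℝ) (hmom : ∀ i k, ∫ ω, (W i ω) ^ k ∂μ = M k)
    {s : Finset (Fin n)} {j : Fin n} (hj : j ∉ s) (k : ℕ) :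
    ∫ ω, (W j ω + ∑ i ∈ s, W i ω) ^ k ∂μ
      = ∑ m ∈ Finset.range (k + 1),
          M m * (∫ ω, (∑ i ∈ s, W i ω) ^ (k - m) ∂μ) * (k.choose m : ℝ) := by
  have hSmeas : Measurable fun ω => ∑ i ∈ s, W i ω :=
    Finset.measurable_sum s fun i _ => hWmeas i
  have hall : ∀ᵐ ω ∂μ, ∀ i, |W i ω| ≤ |α| := (ae_all_iff).2 hWae
  have hSae : ∀ᵐ ω ∂μ, |∑ i ∈ s, W i ω| ≤ (n : ℝ) * |α| := by
    filter_upwards [hall] with ω hω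
    calc |∑ i ∈ s, W i ω| ≤ ∑ i ∈ s, |W i ω| := Finset.abs_sum_le_sum_abs _ _
      _ ≤ ∑ _i ∈ s, |α| := Finset.sum_le_sum fun i _ => hω i
      _ = (s.card : ℝ) * |α| := by rw [Finset.sum_const, nsmul_eq_mul]
      _ ≤ (n : ℝ) * |α| := by
          have h2 : (s.card : ℝ) ≤ n := by
            exact_mod_cast le_trans s.card_le_univ (by simp)
          nlinarith [abs_nonneg α]
  have hintW : ∀ a : ℕ, Integrable (fun ω => (W j ω) ^ a) μ := fun a =>
    int_of_bound ((hWmeas j).pow_const a).aestronglyMeasurable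
      (by filter_upwards [hWae j] with ω hω
          rw [abs_pow]; exact pow_le_pow_left₀ (abs_nonneg _) hω a)
  have hintS : ∀ b : ℕ, Integrable (fun ω => (∑ i ∈ s, W i ω) ^ b) μ := fun b =>
    int_of_bound (hSmeas.pow_const b).aestronglyMeasurable
      (by filter_upwards [hSae] with ω hω
          rw [abs_pow]; exact pow_le_pow_left₀ (abs_nonneg _) hω b)
  have hint : ∀ a b : ℕ,
      Integrable (fun ω => (W j ω) ^ a * (∑ i ∈ s, W i ω) ^ b) μ := fun a b =>
    int_of_bound (((hWmeas j).pow_const a).mul (hSmeas.pow_const b)).aestronglyMeasurable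
      (C := |α| ^ a * ((n : ℝ) * |α|) ^ b)
      (by filter_upwards [hWae j, hSae] with ω h1 h2
          rw [abs_mul, abs_pow, abs_pow]
          exact mul_le_mul (pow_le_pow_left₀ (abs_nonneg _) h1 a)
            (pow_le_pow_left₀ (abs_nonneg _) h2 b) (by positivity) (by positivity))
  have hip : ∀ a b : ℕ,
      IndepFun (fun ω => (W j ω) ^ a) (fun ω => (∑ i ∈ s, W i ω) ^ b) μ := by
    intro a b
    have h0 : IndepFun (∑ i ∈ s, W i) (W j) μ :=
      hindep.indepFun_finset_sum_of_notMem hWmeas hj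
    have h1 := h0.symm.comp (measurable_id.pow_const a) (measurable_id.pow_const b)
    simp only [Function.comp_def, Finset.sum_apply] at h1
    exact h1
  simp_rw [add_pow]
  rw [integral_finset_sum _ (fun m _ => (hint m (k - m)).mul_const _)]
  refine Finset.sum_congr rfl fun m _ => ?_
  rw [integral_mul_const]
  have h2 : ∫ ω, (W j ω) ^ m * (∑ i ∈ s, W i ω) ^ (k - m) ∂μ
      = (∫ ω, (W j ω) ^ m ∂μ) * ∫ ω, (∑ i ∈ s, W i ω) ^ (k - m) ∂μ :=
    (hip m (k - m)).integral_fun_mul_eq_mul_integral (hintW m).aestronglyMeasurable (hintS (k - m)).aestronglyMeasurable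
  rw [h2, hmom j m]

set_option maxHeartbeats 1000000 in
lemma bern_key (hWmeas : ∀ i, Measurable (W i))
    (hindep : iIndepFun W μ)
    (hWae : ∀ i, ∀ᵐ ω ∂μ, |W i ω| ≤ |α|)
    (hp0 : 0 ≤ p) (hp1 : p ≤ 1)
    (hmom : ∀ i k, ∫ ω, (W i ω) ^ k ∂μ
      = p * (α * (1 - p)) ^ k + (1 - p) * (-(α * p)) ^ k)
    (s : Finset (Fin n)) :
    (∫ ω, (∑ i ∈ s, W i ω) ∂μ) = 0 ∧
    (∫ ω, (∑ i ∈ s, W i ω) ^ 2 ∂μ) = s.card * (α ^ 2 * (p * (1 - p))) ∧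
    (∫ ω, (∑ i ∈ s, W i ω) ^ 3 ∂μ) = s.card * (α ^ 3 * (p * (1 - p)) * (1 - 2 * p)) ∧
    (∫ ω, (∑ i ∈ s, W i ω) ^ 4 ∂μ)
      ≤ s.card * (α ^ 4 * (p * (1 - p))) + 3 * (s.card : ℝ) ^ 2 * (α ^ 4 * (p * (1 - p)) ^ 2) ∧
    (∫ ω, (∑ i ∈ s, W i ω) ^ 6 ∂μ)
      ≤ α ^ 6 * (p * (1 - p)) * (s.card + 25 * (s.card : ℝ) ^ 2 * (p * (1 - p))
          + 15 * (s.card : ℝ) ^ 3 * (p * (1 - p)) ^ 2) := by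
  classical
  set M : ℕ → ℝ := fun k => p * (α * (1 - p)) ^ k + (1 - p) * (-(α * p)) ^ k with hM
  have hmom' : ∀ i k, ∫ ω, (W i ω) ^ k ∂μ = M k := hmom
  have hκ0 : 0 ≤ p * (1 - p) := mul_nonneg hp0 (by linarith)
  have hκ14 : p * (1 - p) ≤ 1 / 4 := by nlinarith [sq_nonneg (1 - 2 * p)]
  have ha6 : (0:ℝ) ≤ α ^ 6 := by positivity
  have ha4κ : (0:ℝ) ≤ α ^ 4 * (p * (1 - p)) := mul_nonneg (by positivity) hκ0
  have hM0 : M 0 = 1 := by simp only [hM]; ring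
  have hM1 : M 1 = 0 := by simp only [hM]; ring
  have hM2 : M 2 = α ^ 2 * (p * (1 - p)) := by simp only [hM]; ring
  have hM3 : M 3 = α ^ 3 * (p * (1 - p)) * (1 - 2 * p) := by simp only [hM]; ring
  have hM4e : M 4 = α ^ 4 * (p * (1 - p)) * ((1 - p) ^ 3 + p ^ 3) := by simp only [hM]; ring
  have hM6e : M 6 = α ^ 6 * (p * (1 - p)) * ((1 - p) ^ 5 + p ^ 5) := by simp only [hM]; ring
  have h33 : (1 - p) ^ 3 + p ^ 3 ≤ 1 := by nlinarith [hκ0]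
  have h33' : (0:ℝ) ≤ (1 - p) ^ 3 + p ^ 3 := by
    have := pow_nonneg hp0 3
    have := pow_nonneg (show (0:ℝ) ≤ 1 - p by linarith) 3
    linarith
  have h55 : (1 - p) ^ 5 + p ^ 5 ≤ 1 := by
    nlinarith [mul_nonneg hκ0 (show (0:ℝ) ≤ 1 - p * (1 - p) by nlinarith)]
  have hM4b : M 4 ≤ α ^ 4 * (p * (1 - p)) := by
    rw [hM4e]
    calc α ^ 4 * (p * (1 - p)) * ((1 - p) ^ 3 + p ^ 3)
        ≤ α ^ 4 * (p * (1 - p)) * 1 := mul_le_mul_of_nonneg_left h33 ha4κ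
      _ = α ^ 4 * (p * (1 - p)) := by ring
  have hM4nn : 0 ≤ M 4 := by rw [hM4e]; exact mul_nonneg ha4κ h33'
  have hM2nn : 0 ≤ M 2 := by
    rw [hM2]; exact mul_nonneg (by positivity) hκ0
  have hM6b : M 6 ≤ α ^ 6 * (p * (1 - p)) := by
    rw [hM6e]
    calc α ^ 6 * (p * (1 - p)) * ((1 - p) ^ 5 + p ^ 5)
        ≤ α ^ 6 * (p * (1 - p)) * 1 :=
          mul_le_mul_of_nonneg_left h55 (mul_nonneg ha6 hκ0)
      _ = α ^ 6 * (p * (1 - p)) := by ring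
  induction s using Finset.cons_induction with
  | empty => simp
  | cons j s hj ih =>
    obtain ⟨ih1, ih2, ih3, ih4, ih6⟩ := ih
    have hX4nn : 0 ≤ ∫ ω, (∑ i ∈ s, W i ω) ^ 4 ∂μ :=
      integral_nonneg fun ω => by positivity
    have hstep := fun k => bern_step hWmeas hindep hWae M hmom' hj k
    have hc0 : (0:ℝ) ≤ (s.card : ℝ) := Nat.cast_nonneg _
    have hcard : ((Finset.cons j s hj).card : ℝ) = (s.card : ℝ) + 1 := by
      rw [Finset.card_cons]; push_cast; ring
    simp_rw [Finset.sum_cons]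
    refine ⟨?_, ?_, ?_, ?_, ?_⟩
    · have h1 := hstep 1
      simp only [Finset.sum_range_succ, Finset.sum_range_zero] at h1
      norm_num [hM0, hM1, ih1] at h1
      simpa using h1
    · have h2 := hstep 2
      simp only [Finset.sum_range_succ, Finset.sum_range_zero] at h2
      norm_num [hM0, hM1, hM2, ih1, ih2] at h2
      rw [h2, hcard]; ring
    · have h3 := hstep 3
      simp only [Finset.sum_range_succ, Finset.sum_range_zero] at h3
      norm_num [hM0, hM1, hM2, hM3, ih1, ih2, ih3] at h3
      rw [h3, hcard]; ring
    · have h4 := hstep 4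
      simp only [Finset.sum_range_succ, Finset.sum_range_zero] at h4
      norm_num [hM0, hM1, hM2, hM3, ih1, ih2, ih3] at h4
      rw [h4, hcard, show ((Nat.choose 4 2 : ℕ) : ℝ) = 6 by
        rw [show Nat.choose 4 2 = 6 from by decide]; norm_num]
      linarith [ih4, hM4b,
        mul_nonneg (show (0:ℝ) ≤ α ^ 4 by positivity) (sq_nonneg (p * (1 - p)))]
    · have h6 := hstep 6
      simp only [Finset.sum_range_succ, Finset.sum_range_zero] at h6
      norm_num [hM0, hM1, hM2, hM3, ih1, ih2, ih3] at h6
      rw [h6, hcard,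
        show ((Nat.choose 6 2 : ℕ) : ℝ) = 15 by
          rw [show Nat.choose 6 2 = 15 from by decide]; norm_num,
        show ((Nat.choose 6 3 : ℕ) : ℝ) = 20 by
          rw [show Nat.choose 6 3 = 20 from by decide]; norm_num,
        show ((Nat.choose 6 4 : ℕ) : ℝ) = 15 by
          rw [show Nat.choose 6 4 = 15 from by decide]; norm_num]
      have hκ2 : (0:ℝ) ≤ α ^ 2 * (p * (1 - p)) := mul_nonneg (by positivity) hκ0
      have P1 := mul_le_mul_of_nonneg_left ih4 hκ2
      have P3 := mul_le_mul_of_nonneg_right hM4b (mul_nonneg hc0 hκ2)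
      have P2 : α ^ 3 * (p * (1 - p)) * (1 - 2 * p) *
            ((s.card : ℝ) * (α ^ 3 * (p * (1 - p)) * (1 - 2 * p)))
          ≤ (s.card : ℝ) * (α ^ 6 * (p * (1 - p)) ^ 2) := by
        nlinarith [mul_nonneg (mul_nonneg hc0 (mul_nonneg ha6 (sq_nonneg (p * (1 - p))))) hκ0]
      have q1 : (0:ℝ) ≤ α ^ 6 * (p * (1 - p)) * (p * (1 - p)) :=
        mul_nonneg (mul_nonneg ha6 hκ0) hκ0
      have q2 : (0:ℝ) ≤ α ^ 6 * (p * (1 - p)) * (p * (1 - p)) * (p * (1 - p)) :=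
        mul_nonneg q1 hκ0
      have q3 : (0:ℝ) ≤ (s.card : ℝ) * (α ^ 6 * (p * (1 - p)) * (p * (1 - p)) * (p * (1 - p))) :=
        mul_nonneg hc0 q2
      linarith [ih6, hM6b, P1, P2, P3, q1, q2, q3]


end AuxiliaryBernoulliMoments

set_option maxHeartbeats 1000000 in
/-- Let `W = α (Z - p)` with `Z ~ Bernoulli(p)`, and `W 1, ..., W n`
i.i.d. copies of `W`, `Xₙ = ∑ i, W i`. Then
`E|Xₙ² - E[Xₙ²]|³ ≤ 34.5 · α⁶ · p(1-p) · n³`.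
The common law of the `W i` is the two-point law placing mass `p` at `α(1-p)`
and mass `1-p` at `-αp`. -/
theorem third_central_moment_of_square_sum_bernoulli
    {Ω : Type*} [MeasurableSpace Ω] (μ : Measure Ω) [IsProbabilityMeasure μ]
    (n : ℕ) (hn : 0 < n) (α p : ℝ) (hp0 : 0 ≤ p) (hp1 : p ≤ 1)
    (W : Fin n → Ω → ℝ)
    (hWmeas : ∀ i, Measurable (W i))
    (hindep : iIndepFun W μ)
    (hlaw : ∀ i, Measure.map (W i) μ
      = (ENNReal.ofReal p) • Measure.dirac (α * (1 - p))
        + (ENNReal.ofReal (1 - p)) • Measure.dirac (-(α * p))) :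
    ∫ ω, |(∑ i, W i ω) ^ 2 - ∫ ω', (∑ i, W i ω') ^ 2 ∂μ| ^ 3 ∂μ
      ≤ 34.5 * α ^ 6 * (p * (1 - p)) * n ^ 3 := by
  have hWae : ∀ i, ∀ᵐ ω ∂μ, |W i ω| ≤ |α| := fun i => bern_ae hWmeas hlaw hp0 hp1 i
  have hmom : ∀ i k, ∫ ω, (W i ω) ^ k ∂μ
      = p * (α * (1 - p)) ^ k + (1 - p) * (-(α * p)) ^ k :=
    fun i k => bern_mom hWmeas hlaw hp0 hp1 i k
  obtain ⟨k1, k2, k3, k4, k6⟩ := bern_key hWmeas hindep hWae hp0 hp1 hmom Finset.univ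
  rw [Finset.card_univ, Fintype.card_fin] at k2 k6
  set m : ℝ := ∫ ω', (∑ i, W i ω') ^ 2 ∂μ with hmdef
  have hκ0 : 0 ≤ p * (1 - p) := mul_nonneg hp0 (by linarith)
  have hκ14 : p * (1 - p) ≤ 1 / 4 := by nlinarith [sq_nonneg (1 - 2 * p)]
  have hm0 : 0 ≤ m := by
    rw [hmdef]; exact integral_nonneg fun ω => by positivity
  -- measurability / integrability
  have hSmeas : Measurable fun ω => ∑ i, W i ω :=
    Finset.measurable_sum Finset.univ fun i _ => hWmeas i
  have hall : ∀ᵐ ω ∂μ, ∀ i, |W i ω| ≤ |α| := (ae_all_iff).2 hWae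
  have hSae : ∀ᵐ ω ∂μ, |∑ i, W i ω| ≤ (n : ℝ) * |α| := by
    filter_upwards [hall] with ω hω
    calc |∑ i, W i ω| ≤ ∑ i, |W i ω| := Finset.abs_sum_le_sum_abs _ _
      _ ≤ ∑ _i : Fin n, |α| := Finset.sum_le_sum fun i _ => hω i
      _ = (n : ℝ) * |α| := by
          rw [Finset.sum_const, nsmul_eq_mul, Finset.card_univ, Fintype.card_fin]
  have hintS : ∀ b : ℕ, Integrable (fun ω => (∑ i, W i ω) ^ b) μ := fun b =>
    int_of_bound (hSmeas.pow_const b).aestronglyMeasurable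
      (by filter_upwards [hSae] with ω hω
          rw [abs_pow]; exact pow_le_pow_left₀ (abs_nonneg _) hω b)
  have hintL : Integrable (fun ω => |(∑ i, W i ω) ^ 2 - m| ^ 3) μ :=
    int_of_bound
      ((((hSmeas.pow_const 2).sub_const m).abs.pow_const 3)).aestronglyMeasurable
      (C := (((n : ℝ) * |α|) ^ 2 + |m|) ^ 3)
      (by filter_upwards [hSae] with ω hω
          rw [abs_pow, abs_abs]
          refine pow_le_pow_left₀ (abs_nonneg _) ?_ 3
          calc |(∑ i, W i ω) ^ 2 - m| ≤ |(∑ i, W i ω) ^ 2| + |m| := abs_sub _ _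
            _ ≤ ((n : ℝ) * |α|) ^ 2 + |m| := by
                rw [abs_pow]
                gcongr)
  have hintR : Integrable
      (fun ω => (∑ i, W i ω) ^ 6 - m * (∑ i, W i ω) ^ 4
        - m ^ 2 * (∑ i, W i ω) ^ 2 + m ^ 3) μ :=
    (((hintS 6).sub ((hintS 4).const_mul m)).sub ((hintS 2).const_mul (m ^ 2))).add
      (integrable_const _)
  have hmono : ∫ ω, |(∑ i, W i ω) ^ 2 - m| ^ 3 ∂μ
      ≤ ∫ ω, ((∑ i, W i ω) ^ 6 - m * (∑ i, W i ω) ^ 4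
          - m ^ 2 * (∑ i, W i ω) ^ 2 + m ^ 3) ∂μ := by
    refine integral_mono hintL hintR fun ω => ?_
    have h1 : |(∑ i, W i ω) ^ 2 - m| ≤ (∑ i, W i ω) ^ 2 + m := by
      rw [abs_le]
      constructor <;> nlinarith [sq_nonneg (∑ i, W i ω)]
    calc |(∑ i, W i ω) ^ 2 - m| ^ 3
        = ((∑ i, W i ω) ^ 2 - m) ^ 2 * |(∑ i, W i ω) ^ 2 - m| := by
          rw [pow_succ, sq_abs]
      _ ≤ ((∑ i, W i ω) ^ 2 - m) ^ 2 * ((∑ i, W i ω) ^ 2 + m) :=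
          mul_le_mul_of_nonneg_left h1 (sq_nonneg _)
      _ = (∑ i, W i ω) ^ 6 - m * (∑ i, W i ω) ^ 4
          - m ^ 2 * (∑ i, W i ω) ^ 2 + m ^ 3 := by ring
  have hsplit : ∫ ω, ((∑ i, W i ω) ^ 6 - m * (∑ i, W i ω) ^ 4
      - m ^ 2 * (∑ i, W i ω) ^ 2 + m ^ 3) ∂μ
      = (∫ ω, (∑ i, W i ω) ^ 6 ∂μ) - m * (∫ ω, (∑ i, W i ω) ^ 4 ∂μ)
        - m ^ 2 * (∫ ω, (∑ i, W i ω) ^ 2 ∂μ) + m ^ 3 := by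
    have hI2 : Integrable (fun ω => m * (∑ i, W i ω) ^ 4) μ := (hintS 4).const_mul m
    have hI3 : Integrable (fun ω => m ^ 2 * (∑ i, W i ω) ^ 2) μ := (hintS 2).const_mul (m ^ 2)
    have hI3' : Integrable (fun ω => m ^ 2 * (∑ i, W i ω) ^ 2 - m ^ 3) μ :=
      hI3.sub (integrable_const _)
    have hI23 : Integrable
        (fun ω => m * (∑ i, W i ω) ^ 4 + (m ^ 2 * (∑ i, W i ω) ^ 2 - m ^ 3)) μ :=
      hI2.add hI3'
    rw [show (fun ω => (∑ i, W i ω) ^ 6 - m * (∑ i, W i ω) ^ 4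
          - m ^ 2 * (∑ i, W i ω) ^ 2 + m ^ 3)
        = (fun ω => (∑ i, W i ω) ^ 6 - (m * (∑ i, W i ω) ^ 4
          + (m ^ 2 * (∑ i, W i ω) ^ 2 - m ^ 3))) from by funext ω; ring,
      integral_sub (hintS 6) hI23, integral_add hI2 hI3',
      integral_sub hI3 (integrable_const _),
      integral_const_mul, integral_const_mul, integral_const]
    simp only [measure_univ, probReal_univ, ENNReal.toReal_one, smul_eq_mul, one_mul, mul_one]
    ring
  have hX4nn : 0 ≤ ∫ ω, (∑ i, W i ω) ^ 4 ∂μ := integral_nonneg fun ω => by positivity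
  have hend : (∫ ω, (∑ i, W i ω) ^ 6 ∂μ) - m * (∫ ω, (∑ i, W i ω) ^ 4 ∂μ)
        - m ^ 2 * (∫ ω, (∑ i, W i ω) ^ 2 ∂μ) + m ^ 3
      ≤ ∫ ω, (∑ i, W i ω) ^ 6 ∂μ := by
    have : m ^ 2 * (∫ ω, (∑ i, W i ω) ^ 2 ∂μ) = m ^ 3 := by
      rw [← hmdef]; ring
    rw [this]
    nlinarith [mul_nonneg hm0 hX4nn]
  have hN1 : (1:ℝ) ≤ (n : ℝ) := by exact_mod_cast hn
  have hN0 : (0:ℝ) ≤ (n : ℝ) := by linarith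
  have ha6 : (0:ℝ) ≤ α ^ 6 := by positivity
  have hfinal : α ^ 6 * (p * (1 - p)) * ((n : ℝ) + 25 * (n : ℝ) ^ 2 * (p * (1 - p))
        + 15 * (n : ℝ) ^ 3 * (p * (1 - p)) ^ 2)
      ≤ 34.5 * α ^ 6 * (p * (1 - p)) * (n : ℝ) ^ 3 := by
    have hin : (n : ℝ) + 25 * (n : ℝ) ^ 2 * (p * (1 - p))
        + 15 * (n : ℝ) ^ 3 * (p * (1 - p)) ^ 2 ≤ 34.5 * (n : ℝ) ^ 3 := by
      nlinarith [mul_nonneg (mul_nonneg hN0 hN0) (show (0:ℝ) ≤ (n:ℝ) - 1 by linarith),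
        mul_nonneg hN0 (show (0:ℝ) ≤ (n:ℝ) - 1 by linarith),
        mul_nonneg (mul_nonneg hN0 (mul_nonneg hN0 hN0))
          (mul_nonneg (show (0:ℝ) ≤ 1/4 - p * (1 - p) by linarith)
            (show (0:ℝ) ≤ 1/4 + p * (1 - p) by linarith)),
        mul_nonneg (mul_nonneg hN0 hN0)
          (show (0:ℝ) ≤ 1/4 - p * (1 - p) by linarith)]
    calc α ^ 6 * (p * (1 - p)) * ((n : ℝ) + 25 * (n : ℝ) ^ 2 * (p * (1 - p))
          + 15 * (n : ℝ) ^ 3 * (p * (1 - p)) ^ 2)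
        ≤ α ^ 6 * (p * (1 - p)) * (34.5 * (n : ℝ) ^ 3) :=
          mul_le_mul_of_nonneg_left hin (mul_nonneg ha6 hκ0)
      _ = 34.5 * α ^ 6 * (p * (1 - p)) * (n : ℝ) ^ 3 := by ring
  calc ∫ ω, |(∑ i, W i ω) ^ 2 - m| ^ 3 ∂μ
      ≤ ∫ ω, ((∑ i, W i ω) ^ 6 - m * (∑ i, W i ω) ^ 4
          - m ^ 2 * (∑ i, W i ω) ^ 2 + m ^ 3) ∂μ := hmono
    _ = (∫ ω, (∑ i, W i ω) ^ 6 ∂μ) - m * (∫ ω, (∑ i, W i ω) ^ 4 ∂μ)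
        - m ^ 2 * (∫ ω, (∑ i, W i ω) ^ 2 ∂μ) + m ^ 3 := hsplit
    _ ≤ ∫ ω, (∑ i, W i ω) ^ 6 ∂μ := hend
    _ ≤ α ^ 6 * (p * (1 - p)) * ((n : ℝ) + 25 * (n : ℝ) ^ 2 * (p * (1 - p))
        + 15 * (n : ℝ) ^ 3 * (p * (1 - p)) ^ 2) := k6
    _ ≤ 34.5 * α ^ 6 * (p * (1 - p)) * (n : ℝ) ^ 3 := hfinal
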